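/- arXiv:1211.4135 — 3 statements merged into one kernel-verified Lean document; each statement's English description precedes it below -/
import Mathlib

section
/- Let R be an integral domain, M a torsion-free R-module, and S a nontrivial commutative R-algebra which is flat as an R-module. Then the canonical R-linear map M → S ⊗_R M sending x to 1 ⊗ x is injective. -/
/-- The module-theoretic core of Lemma 4: if `R` is an integral domain, `M` a
torsion-free `R`-module and `S` a nontrivial flat commutative `R`-algebra, the
canonical map `M → S ⊗[R] M`, `x ↦ 1 ⊗ x`, is injective. -/
theorem injective_one_tmul_of_torsionFree
    (R : Type*) [CommRing R] [IsDomain R]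
    (M : Type*) [AddCommGroup M] [Module R M]
    (S : Type*) [CommRing S] [Algebra R S] [Nontrivial S] [Module.Flat R S]
    (hM : ∀ (r : R) (x : M), r • x = 0 → r = 0 ∨ x = 0) :
    Function.Injective (fun x : M => (1 : S) ⊗ₜ[R] x) := by
  have key : ∀ x : M, (1 : S) ⊗ₜ[R] x = 0 → x = 0 := by
    intro x hx
    by_contra hx0
    -- the map `r ↦ r • x` from `R` to `M` is injective since `M` is torsion-free
    have hinj : Function.Injective (LinearMap.toSpanSingleton R M x) := by
      rw [injective_iff_map_eq_zero]
      intro r hr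
      rcases hM r x hr with h | h
      · exact h
      · exact absurd h hx0
    -- tensoring with the flat module `S` preserves injectivity
    have hinj2 : Function.Injective
        (LinearMap.lTensor S (LinearMap.toSpanSingleton R M x)) :=
      Module.Flat.lTensor_preserves_injective_linearMap _ hinj
    have h1 : LinearMap.lTensor S (LinearMap.toSpanSingleton R M x)
        ((1 : S) ⊗ₜ[R] (1 : R)) = (1 : S) ⊗ₜ[R] x := by
      simp [LinearMap.lTensor_tmul]
    have h0 : (1 : S) ⊗ₜ[R] (1 : R) = (0 : TensorProduct R S R) := by
      apply hinj2
      rw [h1, map_zero, hx]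
    have := congrArg (TensorProduct.rid R S) h0
    simp at this
  intro a b hab
  have : (1 : S) ⊗ₜ[R] (a - b) = 0 := by
    simp only at hab
    rw [TensorProduct.tmul_sub, hab, sub_self]
  exact sub_eq_zero.mp (key _ this)
end

section
/- Let R be a Dedekind domain and (M_i)_{i∈I} an arbitrary family of flat R-modules. Then the product module ∏_{i∈I} M_i is a flat R-module. -/
open TensorProduct LinearMap

/-- A flat module over a domain is torsion-free. -/
lemma Flat.smul_eq_zero_aux {R : Type*} [CommRing R] [IsDomain R]
    (M : Type*) [AddCommGroup M] [Module R M] [Module.Flat R M]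
    {a : R} (ha : a ≠ 0) {m : M} (hm : a • m = 0) : m = 0 := by
  have hreg : IsSMulRegular R a := fun b c h => by
    exact mul_left_cancel₀ ha (by simpa [smul_eq_mul] using h)
  have hreg2 : IsSMulRegular (M ⊗[R] R) a := hreg.lTensor M
  have h1 : a • (m ⊗ₜ[R] (1 : R)) = a • (0 : M ⊗[R] R) := by
    rw [smul_zero, smul_tmul', hm, zero_tmul]
  have h2 := hreg2 h1
  have := congrArg (TensorProduct.rid R M) h2
  simpa using this

/-- Affine content of Corollary 9: over a Dedekind domain, an arbitrary product
of flat modules is flat. -/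
theorem flat_pi_of_flat_dedekind
    (R : Type*) [CommRing R] [IsDedekindDomain R]
    (I : Type*) (M : I → Type*) [∀ i, AddCommGroup (M i)] [∀ i, Module R (M i)]
    [∀ i, Module.Flat R (M i)] :
    Module.Flat R (∀ i, M i) := by
  classical
  set P := ∀ i, M i with hP
  -- P is torsion-free
  have htf : ∀ {a : R}, a ≠ 0 → ∀ {p : P}, a • p = 0 → p = 0 := by
    intro a ha p hp
    funext i
    exact Flat.smul_eq_zero_aux (M i) ha (congrFun hp i)
  rw [Module.Flat.iff_lift_lsmul_comp_subtype_injective]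
  intro K _
  set μ : K ⊗[R] P →ₗ[R] P := TensorProduct.lift (LinearMap.lsmul R P ∘ₗ Submodule.subtype K) with hμ
  rw [injective_iff_map_eq_zero]
  by_cases hK : K = ⊥
  · subst hK
    intro z _
    exact Subsingleton.elim z 0
  · obtain ⟨a, haK, ha⟩ := Submodule.exists_mem_ne_zero_of_ne_bot hK
    obtain ⟨J, hJ⟩ : K ∣ Ideal.span {a} :=
      Ideal.dvd_iff_le.mpr ((Ideal.span_singleton_le_iff_mem K).mpr haK)
    have haKJ : a ∈ K * J := by rw [← hJ]; exact Ideal.mem_span_singleton_self a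
    -- key induction over K * J
    have key : ∀ c ∈ K * J, ∃ (L : K ⊗[R] P →ₗ[R] K ⊗[R] P) (σ : K →ₗ[R] K),
        (∀ z, μ z = 0 → L z = 0) ∧ (∀ (v : K) (p : P), L (v ⊗ₜ p) = σ v ⊗ₜ p) ∧
          (∀ v : K, ((a • σ v : K) : R) = c * (v : R)) := by
      intro c hc
      refine Submodule.mul_induction_on hc ?_ ?_
      · intro x hx y hy
        -- dual basis functional h_y
        have hdvd : ∀ v : K, a ∣ (v : R) * y := by
          intro v
          rw [← Ideal.mem_span_singleton, hJ]
          exact Ideal.mul_mem_mul v.2 hy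
        choose f hfspec using hdvd
        have hspec' : ∀ v : K, a * f v = (v : R) * y := fun v => (hfspec v).symm
        set h_y : K →ₗ[R] R :=
          { toFun := f
            map_add' := fun v w => by
              apply mul_left_cancel₀ ha
              rw [mul_add, hspec', hspec', hspec']
              push_cast
              ring
            map_smul' := fun r v => by
              apply mul_left_cancel₀ ha
              simp only [RingHom.id_apply, smul_eq_mul]
              rw [hspec' (r • v), mul_left_comm a r (f v), hspec' v]
              simp only [Submodule.coe_smul, smul_eq_mul]
              ring } with hhy
        have hyval : ∀ v : K, a * h_y v = (v : R) * y := hspec'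
        set σ : K →ₗ[R] K := (LinearMap.toSpanSingleton R K ⟨x, hx⟩).comp h_y with hσ
        set G : K ⊗[R] P →ₗ[R] P := TensorProduct.lift (LinearMap.lsmul R P ∘ₗ h_y) with hG
        set L : K ⊗[R] P →ₗ[R] K ⊗[R] P :=
          ((TensorProduct.mk R K P) ⟨x, hx⟩).comp G with hL
        refine ⟨L, σ, ?_, ?_, ?_⟩
        · intro z hz
          have hGz : G z = 0 := by
            have hGa : (a • G) z = (y • μ) z := by
              have : (a • G : K ⊗[R] P →ₗ[R] P) = y • μ := by
                apply TensorProduct.ext'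
                intro v p
                simp only [LinearMap.smul_apply, hG, hμ, lift.tmul, coe_comp, Function.comp_apply,
                  Submodule.coe_subtype, lsmul_apply, ← smul_assoc, smul_eq_mul]
                rw [hyval v, mul_comm]
              rw [this]
            simp only [LinearMap.smul_apply, hz, smul_zero] at hGa
            exact htf ha hGa
          simp [hL, hGz]
        · intro v p
          simp only [hL, coe_comp, Function.comp_apply, hG, lift.tmul, Submodule.coe_subtype,
            lsmul_apply, mk_apply, hσ, toSpanSingleton_apply]
          rw [smul_tmul]
        · intro v
          have h1 : ((a • σ v : K) : R) = a * h_y v * x := by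
            simp [hσ, toSpanSingleton_apply, smul_eq_mul, mul_assoc]
          rw [h1, hyval v]
          ring
      · rintro b c ⟨L1, σ1, h11, h12, h13⟩ ⟨L2, σ2, h21, h22, h23⟩
        refine ⟨L1 + L2, σ1 + σ2, fun z hz => by simp [h11 z hz, h21 z hz], fun v p => by
          simp only [LinearMap.add_apply, h12, h22, add_tmul], fun v => ?_⟩
        have h1 : ((a • (σ1 + σ2) v : K) : R)
            = ((a • σ1 v : K) : R) + ((a • σ2 v : K) : R) := by
          simp [smul_add]
        rw [h1, h13, h23]
        ring
    obtain ⟨L, σ, hker, hgen, hdual⟩ := key a haKJ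
    have hσid : ∀ v : K, σ v = v := by
      intro v
      refine Subtype.ext (mul_left_cancel₀ ha ?_)
      simpa using hdual v
    have hLid : ∀ z : K ⊗[R] P, L z = z := by
      intro z
      induction z using TensorProduct.induction_on with
      | zero => simp
      | tmul v p => rw [hgen, hσid]
      | add x y hx hy => simp only [map_add, hx, hy]
    intro z hz
    rw [← hLid z]
    exact hker z hz
end

section
/- Let R be a commutative ring, F and N two R-modules, I an index set, and f : ⨁_{i∈I} F → N an R-linear map from the direct sum of I-many copies of F. Then there exist a subset J ⊆ I whose cardinality is at most the cardinality of the set Hom_R(F, N) of R-linear maps from F to N, and a submodule T of ⨁_{i∈I} F contained in the kernel of f, such that T is a direct complement of the canonical submodule ⨁_{j∈J} F (the sum of the coordinate copies indexed by J) inside ⨁_{i∈I} F, and T is isomorphic as an R-module to ⨁_{i∈I∖J} F. -/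
universe u

/-- Module-theoretic content of Lemma 13: given `f : ⨁_{i ∈ I} F → N`, there is
a subset `J ⊆ I` with `|J| ≤ |Hom(F, N)|` and a submodule `T ⊆ ker f` which is a
direct complement of the canonical submodule `⨁_{j ∈ J} F` inside `⨁_{i ∈ I} F`
and is isomorphic to `⨁_{i ∈ I ∖ J} F`.  (Here the direct sum of copies of `F`
indexed by `I` is realized as the finitely supported functions `I →₀ F`, and the
canonical submodule of sections supported on `J` is `Finsupp.supported F R J`.) -/
theorem exists_nice_kernel_summand
    (R : Type u) [CommRing R]
    (F : Type u) [AddCommGroup F] [Module R F]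
    (N : Type u) [AddCommGroup N] [Module R N]
    (I : Type u) (f : (I →₀ F) →ₗ[R] N) :
    ∃ (J : Set I) (T : Submodule R (I →₀ F)),
      Cardinal.mk J ≤ Cardinal.mk (F →ₗ[R] N) ∧
      T ≤ LinearMap.ker f ∧
      T ⊓ Finsupp.supported F R J = ⊥ ∧
      T ⊔ Finsupp.supported F R J = ⊤ ∧
      Nonempty (T ≃ₗ[R] ((↥(Jᶜ)) →₀ F)) := by
  classical
  set φ : I → (F →ₗ[R] N) := fun i => f.comp (Finsupp.lsingle i) with hφ
  have hex : ∀ i : I, ∃ j, φ j = φ i := fun i => ⟨i, rfl⟩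
  set r : I → I := fun i => (hex i).choose with hrdef
  have hr : ∀ i, φ (r i) = φ i := fun i => (hex i).choose_spec
  have hr2 : ∀ i i', φ i = φ i' → r i = r i' := by
    intro i i' h
    simp only [hrdef]
    congr 1
    rw [h]
  set J : Set I := Set.range r with hJ
  have hrr : ∀ i, r (r i) = r i := fun i => hr2 _ _ (hr i)
  have hrJ : ∀ i, r i ∈ J := fun i => ⟨i, rfl⟩
  have hJr : ∀ j ∈ J, r j = j := by rintro j ⟨i, rfl⟩; exact hrr i
  -- the map g
  set g : ((↥(Jᶜ)) →₀ F) →ₗ[R] (I →₀ F) :=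
    Finsupp.lsum R (fun i : ↥(Jᶜ) => Finsupp.lsingle i.1 - Finsupp.lsingle (r i.1)) with hg
  set p : (I →₀ F) →ₗ[R] ((↥(Jᶜ)) →₀ F) := Finsupp.lsubtypeDomain (Jᶜ) with hp
  have hgsingle : ∀ (i : ↥(Jᶜ)) (v : F),
      g (Finsupp.single i v) = Finsupp.single i.1 v - Finsupp.single (r i.1) v := by
    intro i v
    simp [hg]
  have hpsingle : ∀ (i : I) (v : F),
      p (Finsupp.single i v) = if h : i ∈ Jᶜ then Finsupp.single ⟨i, h⟩ v else 0 := by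
    intro i v
    ext j
    by_cases h : i ∈ Jᶜ <;>
      simp [hp, Finsupp.lsubtypeDomain, Finsupp.subtypeDomain, Finsupp.single_apply,
        Subtype.ext_iff, h] <;> aesop
  have hpg : ∀ y, p (g y) = y := by
    intro y
    induction y using Finsupp.induction_linear with
    | zero => simp
    | add a b ha hb => simp [ha, hb]
    | single i v =>
      rw [hgsingle, map_sub, hpsingle, hpsingle]
      have h1 : (i : I) ∈ Jᶜ := i.2
      have h2 : ¬ (r i.1 ∈ Jᶜ) := by simp [hrJ i.1]
      simp [h1, h2]
  have hginj : Function.Injective g := by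
    intro a b h
    have := congrArg p h
    simpa [hpg] using this
  set T := LinearMap.range g with hT
  refine ⟨J, T, ?_, ?_, ?_, ?_, ⟨(LinearEquiv.ofInjective g hginj).symm⟩⟩
  · exact Cardinal.mk_le_of_injective (f := fun j : J => φ j.1)
      (by rintro ⟨_, i, rfl⟩ ⟨_, i', rfl⟩ h
          have : φ i = φ i' := by rw [← hr, ← hr i']; exact h
          exact Subtype.ext (hr2 _ _ this))
  · rintro x ⟨y, rfl⟩
    rw [LinearMap.mem_ker]
    induction y using Finsupp.induction_linear with
    | zero => simp
    | add a b ha hb => simp [map_add, ha, hb]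
    | single i v =>
      rw [hgsingle, map_sub]
      have : f (Finsupp.single i.1 v) = φ i.1 v := rfl
      have h2 : f (Finsupp.single (r i.1) v) = φ (r i.1) v := rfl
      rw [this, h2, hr]
      simp
  · rw [eq_bot_iff]
    rintro x ⟨⟨y, rfl⟩, hx2⟩
    have hpx : p (g y) = 0 := by
      ext j
      have hj : (g y) j.1 = 0 := by
        by_contra h
        exact j.2 (hx2 (Finsupp.mem_support_iff.mpr h))
      simpa [hp, Finsupp.lsubtypeDomain, Finsupp.subtypeDomain] using hj
    rw [hpg] at hpx
    simp [hpx]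
  · rw [eq_top_iff]
    intro x hx
    clear hx
    have hmem : x - g (p x) ∈ Finsupp.supported F R J := by
      induction x using Finsupp.induction_linear with
      | zero => simp
      | add a b ha hb =>
        have : a + b - g (p (a + b)) = (a - g (p a)) + (b - g (p b)) := by
          simp [map_add]; abel
        rw [this]; exact Submodule.add_mem _ ha hb
      | single i v =>
        by_cases h : i ∈ Jᶜ
        · rw [hpsingle]
          simp only [h, dif_pos]
          rw [hgsingle]
          have : Finsupp.single i v - (Finsupp.single i v - Finsupp.single (r i) v)
              = Finsupp.single (r i) v := by abel
          rw [this]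
          exact Finsupp.single_mem_supported R v (hrJ i)
        · rw [hpsingle, dif_neg h, map_zero, sub_zero]
          exact Finsupp.single_mem_supported R v (by simpa using h)
    have : x = g (p x) + (x - g (p x)) := by abel
    rw [this]
    exact Submodule.add_mem _ (Submodule.mem_sup_left ⟨p x, rfl⟩)
      (Submodule.mem_sup_right hmem)
end
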